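/- Let f : ℤ_p → ℤ_p be 1-Lipschitz. If f is surjective, then f is an isometry: |f(y) - f(x)|_p = |y - x|_p for all x, y ∈ ℤ_p. -/

import Mathlib

private lemma key_toZModPow (p : ℕ) [Fact p.Prime] (n : ℕ) (a b : ℤ_[p]) :
    PadicInt.toZModPow n a = PadicInt.toZModPow n b ↔ ‖b - a‖ ≤ (p : ℝ) ^ (-n : ℤ) := by
  rw [PadicInt.norm_le_pow_iff_mem_span_pow, ← PadicInt.ker_toZModPow, RingHom.mem_ker,
    map_sub, sub_eq_zero, eq_comm]

theorem stmt2 (p : ℕ) [Fact p.Prime] (f : ℤ_[p] → ℤ_[p])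
    (hlip : ∀ x y : ℤ_[p], ‖f y - f x‖ ≤ ‖y - x‖)
    (hsurj : Function.Surjective f) :
    ∀ x y : ℤ_[p], ‖f y - f x‖ = ‖y - x‖ := by
  have hp : p.Prime := Fact.out
  -- induced map on ZMod (p^n)
  have hNZ : ∀ n : ℕ, NeZero (p ^ n) := fun n => ⟨pow_ne_zero n hp.ne_zero⟩
  set g : ∀ n : ℕ, ZMod (p ^ n) → ZMod (p ^ n) :=
    fun n a => PadicInt.toZModPow n (f ((a.val : ℤ_[p]))) with hgdef
  have hlift : ∀ (n : ℕ) (a : ZMod (p ^ n)),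
      PadicInt.toZModPow n (((a.val : ℕ) : ℤ_[p])) = a := by
    intro n a
    haveI := hNZ n
    rw [map_natCast, ZMod.natCast_val, ZMod.cast_id]
  have hg : ∀ (n : ℕ) (x : ℤ_[p]),
      g n (PadicInt.toZModPow n x) = PadicInt.toZModPow n (f x) := by
    intro n x
    rw [hgdef]
    apply (key_toZModPow p n _ _).2
    calc ‖f x - f _‖ ≤ ‖x - _‖ := hlip _ _
      _ ≤ (p : ℝ) ^ (-n : ℤ) := (key_toZModPow p n _ x).1 (by rw [hlift])
  have hgsurj : ∀ n : ℕ, Function.Surjective (g n) := by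
    intro n b
    obtain ⟨x, hx⟩ := hsurj ((b.val : ℤ_[p]))
    exact ⟨PadicInt.toZModPow n x, by rw [hg, hx, hlift]⟩
  have hginj : ∀ n : ℕ, Function.Injective (g n) := by
    intro n
    haveI := hNZ n
    exact Finite.injective_iff_surjective.2 (hgsurj n)
  have main : ∀ (n : ℕ) (x y : ℤ_[p]),
      ‖f y - f x‖ ≤ (p : ℝ) ^ (-n : ℤ) → ‖y - x‖ ≤ (p : ℝ) ^ (-n : ℤ) := by
    intro n x y h
    apply (key_toZModPow p n x y).1
    apply hginj n
    rw [hg, hg]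
    exact (key_toZModPow p n (f x) (f y)).2 h
  intro x y
  refine le_antisymm (hlip x y) ?_
  by_contra h
  push_neg at h
  have hxy : y - x ≠ 0 := by
    intro h0
    rw [h0, norm_zero] at h
    exact absurd h (not_lt.2 (norm_nonneg _))
  have hval := PadicInt.norm_eq_zpow_neg_valuation hxy
  have hvnn : 0 ≤ ((y - x).valuation : ℤ) := by positivity
  set n : ℕ := ((y - x).valuation : ℤ).toNat with hn
  have hnval : ‖y - x‖ = (p : ℝ) ^ (-n : ℤ) := by
    rw [hval, hn, Int.toNat_of_nonneg hvnn]
  have h1 : ‖f y - f x‖ < (p : ℝ) ^ (-n : ℤ) := hnval ▸ h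
  have h2 : ‖f y - f x‖ ≤ (p : ℝ) ^ (-(n + 1 : ℕ) : ℤ) := by
    have := (PadicInt.norm_lt_pow_iff_norm_le_pow_sub_one (f y - f x) (-n : ℤ)).1 h1
    convert this using 2
    push_cast; ring
  have h3 := main (n + 1) x y h2
  have h4 : (p : ℝ) ^ (-(n + 1 : ℕ) : ℤ) < (p : ℝ) ^ (-n : ℤ) := by
    apply zpow_lt_zpow_right₀ (by exact_mod_cast hp.one_lt)
    push_cast; omega
  rw [hnval] at h3
  exact absurd (h3.trans_lt h4) (lt_irrefl _)
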